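/- Let m ≥ 1, let g be a constant invertible symmetric m×m complex matrix, let U ⊆ ℝ be open, and let K : U → Mat_m(ℂ) be differentiable with K̄(s)·K(s) = 1 for all s ∈ U. Define h(s) to be the entrywise complex conjugate of K(s)·g. Then h(s) is invertible for every s ∈ U, h is differentiable on U, and for every t ∈ U one has K′(t) + K(t)·( h′(t)·h(t)⁻¹ ) = 0, i.e. the 'connection matrix' ω(t) := h′(t)·h(t)⁻¹ equals −K(t)⁻¹·K′(t). -/

import Mathlib

/-!
Statement 2 (Lemma `2th C` of the paper, along a differentiable curve):
g a constant invertible symmetric m×m complex matrix, U ⊆ ℝ open,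
K : U → Mat_m(ℂ) differentiable with K̄(s)·K(s) = 1 on U, and
h(s) := conj(K(s)·g) (entrywise conjugate).  Then h(s) is invertible on U,
h is differentiable on U (with derivative h′(t) = conj(K′(t)·g)), and
K′(t) + K(t)·(h′(t)·h(t)⁻¹) = 0, i.e. ω(t) := h′(t)·h(t)⁻¹ = −K(t)⁻¹·K′(t).
-/

open Matrix

theorem stmt2 {m : ℕ} (hm : 1 ≤ m)
    (g : Matrix (Fin m) (Fin m) ℂ) (hg_inv : IsUnit g) (hg_symm : gᵀ = g)
    (U : Set ℝ) (hU : IsOpen U)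
    (K K' : ℝ → Matrix (Fin m) (Fin m) ℂ)
    (hKderiv : ∀ s ∈ U, ∀ i j, HasDerivAt (fun t => K t i j) (K' s i j) s)
    (hKinv : ∀ s ∈ U, (K s).map (starRingEnd ℂ) * K s = 1)
    (h : ℝ → Matrix (Fin m) (Fin m) ℂ)
    (hh : ∀ s, h s = (K s * g).map (starRingEnd ℂ)) :
    ∀ t ∈ U, IsUnit (h t) ∧
      (∀ i j, HasDerivAt (fun s => h s i j) (((K' t * g).map (starRingEnd ℂ)) i j) t) ∧
      K' t + K t * (((K' t * g).map (starRingEnd ℂ)) * (h t)⁻¹) = 0 ∧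
      ((K' t * g).map (starRingEnd ℂ)) * (h t)⁻¹ = -((K t)⁻¹ * K' t) := by
  intro t ht
  set c := starRingEnd ℂ
  set b := (K t).map c with hb
  have hBA : b * K t = 1 := hKinv t ht
  have hAB : K t * b = 1 := mul_eq_one_comm.mp hBA
  have hgc : IsUnit (g.map c) := by
    have := hg_inv.map (c.mapMatrix)
    simpa [RingHom.mapMatrix_apply] using this
  have hgu : g.map c * (g.map c)⁻¹ = 1 :=
    Matrix.mul_nonsing_inv _ ((Matrix.isUnit_iff_isUnit_det _).mp hgc)
  have hmap_mul : ∀ M N : Matrix (Fin m) (Fin m) ℂ,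
      (M * N).map c = M.map c * N.map c := fun M N => Matrix.map_mul
  have hht : h t = b * g.map c := by rw [hh, hmap_mul]
  have hbu : IsUnit b := (Matrix.isUnit_iff_isUnit_det _).mpr (Matrix.isUnit_det_of_left_inverse hAB)
  have hhu : IsUnit (h t) := by rw [hht]; exact hbu.mul hgc
  -- derivative of h entrywise
  have hKg : ∀ i j, HasDerivAt (fun s => (K s * g) i j) ((K' t * g) i j) t := by
    intro i j
    simp only [Matrix.mul_apply]
    exact HasDerivAt.fun_sum fun k _ => (hKderiv t ht i k).mul_const _
  have hhderiv : ∀ i j, HasDerivAt (fun s => h s i j)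
      (((K' t * g).map c) i j) t := by
    intro i j
    have := (hKg i j).star
    simp only [hh, Matrix.map_apply]
    simpa using this
  -- derivative of the constant (K s).map c * K s = 1 on U
  have hId : (K' t).map c * K t + b * K' t = 0 := by
    ext i j
    have h1 : HasDerivAt (fun s => ((K s).map c * K s) i j)
        (((K' t).map c * K t + b * K' t) i j) t := by
      simp only [Matrix.mul_apply, Matrix.map_apply, Matrix.add_apply, ← Finset.sum_add_distrib]
      exact HasDerivAt.fun_sum fun k _ =>
        ((hKderiv t ht i k).star.mul (hKderiv t ht k j))
    have h2 : HasDerivAt (fun s => ((K s).map c * K s) i j) 0 t := by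
      have heq : (fun s => ((K s).map c * K s) i j) =ᶠ[nhds t]
          (fun _ => (1 : Matrix (Fin m) (Fin m) ℂ) i j) := by
        filter_upwards [hU.mem_nhds ht] with s hs
        rw [hKinv s hs]
      exact (hasDerivAt_const t _).congr_of_eventuallyEq heq
    have := h1.unique h2
    simpa using this
  -- compute ω
  have hbinv : b⁻¹ = K t := Matrix.inv_eq_right_inv hBA
  have hKinv' : (K t)⁻¹ = b := Matrix.inv_eq_left_inv hBA
  have hωeq : ((K' t * g).map c) * (h t)⁻¹ = (K' t).map c * K t := by
    rw [hmap_mul, hht, Matrix.mul_inv_rev, hbinv]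
    calc (K' t).map c * g.map c * ((g.map c)⁻¹ * K t)
        = (K' t).map c * (g.map c * (g.map c)⁻¹) * K t := by
          noncomm_ring
      _ = (K' t).map c * K t := by rw [hgu, mul_one]
  have hBA' : (K' t).map c * K t = -(b * K' t) :=
    eq_neg_of_add_eq_zero_left hId
  refine ⟨hhu, hhderiv, ?_, ?_⟩
  · rw [hωeq, hBA']
    rw [mul_neg, ← mul_assoc, hAB, one_mul]
    exact add_neg_cancel _
  · rw [hωeq, hBA', hKinv']
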